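/- Let U(n,k) be the number of permutations of {1,…,n} with up-down index k. Then for all integers n > m ≥ 1, U(n, 2^m) = C(n, m+1) − 1. -/

import Mathlib

open Finset

/-- The up-down index of a permutation of `Fin n`: bit `n-2-i` is 1 iff position `i` is an ascent. -/
def updownIndex (n : ℕ) (π : Equiv.Perm (Fin n)) : ℕ :=
  ∑ i : Fin (n - 1),
    if π ⟨i.val + 1, by have := i.isLt; omega⟩ > π ⟨i.val, by have := i.isLt; omega⟩
    then 2 ^ (n - 2 - i.val) else 0

/-- The number of permutations of `{1, ..., n}` with up-down index `k`. -/
def U (n k : ℕ) : ℕ :=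
  (Finset.univ.filter (fun π : Equiv.Perm (Fin n) => updownIndex n π = k)).card

/-- The set of ascent positions of a permutation. -/
def ascSet (n : ℕ) (π : Equiv.Perm (Fin n)) : Finset (Fin (n - 1)) :=
  Finset.univ.filter fun i =>
    π ⟨i.val + 1, by have := i.isLt; omega⟩ > π ⟨i.val, by have := i.isLt; omega⟩

lemma updown_eq_sum (n : ℕ) (π : Equiv.Perm (Fin n)) :
    updownIndex n π = ∑ i ∈ ascSet n π, 2 ^ (n - 2 - i.val) := by
  rw [updownIndex, ascSet, Finset.sum_filter]

lemma sum_range_two_pow (k : ℕ) : ∑ j ∈ Finset.range k, 2 ^ j = 2 ^ k - 1 := by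
  induction k with
  | zero => simp
  | succ k ih =>
    rw [Finset.sum_range_succ, ih]
    have h1 : 1 ≤ 2 ^ k := Nat.one_le_two_pow
    have h2 : 2 ^ (k + 1) = 2 ^ k + 2 ^ k := by ring
    omega

lemma sum_two_pow_eq_pow {T : Finset ℕ} {m : ℕ} :
    ∑ j ∈ T, 2 ^ j = 2 ^ m ↔ T = {m} := by
  constructor
  · intro h
    have hmT : m ∈ T := by
      by_contra hm
      have hsub : T ⊆ Finset.range m := by
        intro j hj
        rw [Finset.mem_range]
        have hle : 2 ^ j ≤ 2 ^ m := h ▸ Finset.single_le_sum (fun i _ => Nat.zero_le _) hj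
        have hjm : j ≤ m := (Nat.pow_le_pow_iff_right (by norm_num)).1 hle
        rcases Nat.lt_or_ge j m with h' | h'
        · exact h'
        · exact absurd (le_antisymm hjm h' ▸ hj) hm
      have := Finset.sum_le_sum_of_subset hsub (f := fun j => 2 ^ j)
      rw [h, sum_range_two_pow] at this
      have : (0:ℕ) < 2 ^ m := Nat.pow_pos (by norm_num)
      omega
    have herase : ∑ j ∈ T.erase m, 2 ^ j = 0 := by
      have h2 : 2 ^ m + ∑ j ∈ T.erase m, 2 ^ j = ∑ j ∈ T, 2 ^ j :=
        Finset.add_sum_erase T (fun j => 2 ^ j) hmT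
      omega
    have hempty : T.erase m = ∅ := by
      by_contra hne
      obtain ⟨x, hx⟩ := Finset.nonempty_iff_ne_empty.2 hne
      have hx0 : 2 ^ x = 0 := Finset.sum_eq_zero_iff.1 herase x hx
      exact absurd hx0 (Nat.pos_iff_ne_zero.1 (Nat.pow_pos (by norm_num) : 0 < 2 ^ x))
    have := Finset.insert_erase hmT
    rw [hempty] at this
    simpa using this.symm
  · rintro rfl; simp

lemma updown_eq_pow_iff (n m : ℕ) (hn : 2 ≤ n) (π : Equiv.Perm (Fin n)) :
    updownIndex n π = 2 ^ m ↔
      m ≤ n - 2 ∧ ascSet n π = {⟨n - 2 - m, by omega⟩} := by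
  have hinj : ∀ i ∈ ascSet n π, ∀ j ∈ ascSet n π,
      n - 2 - i.val = n - 2 - j.val → i = j := by
    intro i _ j _ h
    have hi := i.isLt; have hj := j.isLt
    exact Fin.ext (by omega)
  have himg : ∑ i ∈ ascSet n π, 2 ^ (n - 2 - i.val)
      = ∑ j ∈ (ascSet n π).image (fun i : Fin (n-1) => n - 2 - i.val), 2 ^ j :=
    (Finset.sum_image hinj).symm
  rw [updown_eq_sum, himg, sum_two_pow_eq_pow]
  constructor
  · intro h
    have hmmem : m ∈ (ascSet n π).image (fun i : Fin (n-1) => n - 2 - i.val) := by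
      rw [h]; exact Finset.mem_singleton_self m
    obtain ⟨i, hi, hival⟩ := Finset.mem_image.1 hmmem
    have hival' : n - 2 - (i : ℕ) = m := hival
    have hilt := i.isLt
    have hm2 : m ≤ n - 2 := by omega
    refine ⟨hm2, ?_⟩
    ext j
    simp only [Finset.mem_singleton]
    constructor
    · intro hj
      have : (fun i : Fin (n-1) => n - 2 - i.val) j ∈ ({m} : Finset ℕ) := by
        rw [← h]; exact Finset.mem_image_of_mem _ hj
      rw [Finset.mem_singleton] at this
      have hthis : n - 2 - (j : ℕ) = m := this
      have hjlt := j.isLt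
      exact Fin.ext (show (j : ℕ) = n - 2 - m by omega)
    · intro hj
      have : j = i := by
        subst hj
        exact Fin.ext (show n - 2 - m = (i : ℕ) by omega)
      exact this ▸ hi
  · rintro ⟨hm2, h⟩
    rw [h, Finset.image_singleton]
    congr 1
    rw [Fin.val_mk]
    omega

section Block

variable {n p : ℕ}

lemma compl_card (hp : p + 2 ≤ n) {S : Finset (Fin n)} (hS : S.card = p + 1) :
    Sᶜ.card = n - (p + 1) := by
  rw [Finset.card_compl, Fintype.card_fin, hS]

/-- The permutation decreasing on positions `0..p` (values `S`) and on `p+1..n-1`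
(values `Sᶜ`). -/
noncomputable def blockFun (hp : p + 2 ≤ n) (S : Finset (Fin n)) (hS : S.card = p + 1) :
    Fin n → Fin n :=
  fun i =>
    if h : i.val ≤ p then
      S.orderEmbOfFin hS ⟨p - i.val, by omega⟩
    else
      Sᶜ.orderEmbOfFin (compl_card hp hS) ⟨n - 1 - i.val, by have := i.isLt; omega⟩

lemma blockFun_inj (hp : p + 2 ≤ n) (S : Finset (Fin n)) (hS : S.card = p + 1) :
    Function.Injective (blockFun hp S hS) := by
  intro i j h
  unfold blockFun at h
  have hi := i.isLt; have hj := j.isLt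
  split_ifs at h with h1 h2 h2
  · have := (S.orderEmbOfFin hS).injective h
    rw [Fin.mk.injEq] at this
    exact Fin.ext (by omega)
  · exact absurd (h ▸ S.orderEmbOfFin_mem hS _) (by
      have := Sᶜ.orderEmbOfFin_mem (compl_card hp hS) ⟨n - 1 - j.val, by omega⟩
      simp only [Finset.mem_compl] at this ⊢
      exact this)
  · exact absurd (h ▸ Sᶜ.orderEmbOfFin_mem (compl_card hp hS) _) (by
      have := S.orderEmbOfFin_mem hS ⟨p - j.val, by omega⟩
      simp only [Finset.mem_compl]
      exact fun hc => hc this)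
  · have := (Sᶜ.orderEmbOfFin (compl_card hp hS)).injective h
    rw [Fin.mk.injEq] at this
    exact Fin.ext (by omega)

noncomputable def blockPerm (hp : p + 2 ≤ n) (S : Finset (Fin n)) (hS : S.card = p + 1) :
    Equiv.Perm (Fin n) :=
  Equiv.ofBijective _ ((Fintype.bijective_iff_injective_and_card _).2
    ⟨blockFun_inj hp S hS, rfl⟩)

lemma blockPerm_apply (hp : p + 2 ≤ n) (S : Finset (Fin n)) (hS : S.card = p + 1) (i : Fin n) :
    blockPerm hp S hS i = blockFun hp S hS i := rfl

lemma blockPerm_apply_le (hp : p + 2 ≤ n) (S : Finset (Fin n)) (hS : S.card = p + 1)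
    (i : Fin n) (h : i.val ≤ p) :
    blockPerm hp S hS i = S.orderEmbOfFin hS ⟨p - i.val, by omega⟩ := by
  rw [blockPerm_apply]
  unfold blockFun
  rw [dif_pos h]

lemma blockPerm_apply_gt (hp : p + 2 ≤ n) (S : Finset (Fin n)) (hS : S.card = p + 1)
    (i : Fin n) (h : p < i.val) :
    blockPerm hp S hS i
      = Sᶜ.orderEmbOfFin (compl_card hp hS) ⟨n - 1 - i.val, by have := i.isLt; omega⟩ := by
  rw [blockPerm_apply]
  unfold blockFun
  rw [dif_neg (by omega)]

lemma blockPerm_not_ascent (hp : p + 2 ≤ n) (S : Finset (Fin n)) (hS : S.card = p + 1)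
    (k : ℕ) (hk : k + 1 < n) (hkp : k ≠ p) :
    blockPerm hp S hS ⟨k + 1, hk⟩ < blockPerm hp S hS ⟨k, by omega⟩ := by
  rcases Nat.lt_or_ge k p with hlt | hge
  · rw [blockPerm_apply_le hp S hS ⟨k + 1, hk⟩ (show k + 1 ≤ p by omega),
        blockPerm_apply_le hp S hS ⟨k, by omega⟩ (show k ≤ p by omega)]
    apply (S.orderEmbOfFin hS).strictMono
    simp only [Fin.mk_lt_mk]
    omega
  · have hgt : p < k := by omega
    rw [blockPerm_apply_gt hp S hS ⟨k + 1, hk⟩ (show p < k + 1 by omega),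
        blockPerm_apply_gt hp S hS ⟨k, by omega⟩ hgt]
    apply (Sᶜ.orderEmbOfFin (compl_card hp hS)).strictMono
    simp only [Fin.mk_lt_mk]
    omega

lemma blockPerm_ascSet (hp : p + 2 ≤ n) (S : Finset (Fin n)) (hS : S.card = p + 1) :
    ascSet n (blockPerm hp S hS) ⊆ {⟨p, by omega⟩} := by
  intro i hi
  rw [Finset.mem_singleton]
  by_contra hne
  have hilt := i.isLt
  have hkp : (i : ℕ) ≠ p := fun h => hne (Fin.ext h)
  have hk := blockPerm_not_ascent hp S hS i.val (Nat.add_lt_of_lt_sub hilt) hkp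
  rw [ascSet, Finset.mem_filter] at hi
  exact absurd hi.2 (not_lt.2 (le_of_lt hk))

/-- The forward map: values on the first `p+1` positions. -/
def firstBlock (n p : ℕ) (hp : p + 2 ≤ n) (π : Equiv.Perm (Fin n)) : Finset (Fin n) :=
  Finset.univ.image fun j : Fin (p + 1) => π ⟨j.val, by have := j.isLt; omega⟩

lemma firstBlock_card (hp : p + 2 ≤ n) (π : Equiv.Perm (Fin n)) :
    (firstBlock n p hp π).card = p + 1 := by
  rw [firstBlock, Finset.card_image_of_injective _ (fun a b h => by
    have := π.injective h
    rw [Fin.mk.injEq] at this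
    exact Fin.ext this)]
  simp

lemma firstBlock_blockPerm (hp : p + 2 ≤ n) (S : Finset (Fin n)) (hS : S.card = p + 1) :
    firstBlock n p hp (blockPerm hp S hS) = S := by
  ext x
  rw [firstBlock, Finset.mem_image]
  constructor
  · rintro ⟨j, -, rfl⟩
    rw [blockPerm_apply_le hp S hS ⟨(j : ℕ), by have := j.isLt; omega⟩
      (show (j : ℕ) ≤ p by have := j.isLt; omega)]
    exact S.orderEmbOfFin_mem hS _
  · intro hx
    have hx2 : x ∈ Set.range (S.orderEmbOfFin hS) := by
      rw [Finset.range_orderEmbOfFin]; exact hx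
    obtain ⟨k, hk⟩ := hx2
    have hklt := k.isLt
    refine ⟨⟨p - k.val, by omega⟩, Finset.mem_univ _, ?_⟩
    rw [blockPerm_apply_le hp S hS ⟨p - (k : ℕ), by omega⟩ (show p - (k : ℕ) ≤ p by omega), ← hk]
    exact congrArg _ (Fin.ext (show p - (p - (k : ℕ)) = (k : ℕ) by omega))

/-- Strict descents propagate. -/
lemma desc_trans {n : ℕ} (π : Equiv.Perm (Fin n)) :
    ∀ b a : ℕ, (hb : b < n) → (hab : a < b) →
    (∀ k, (hk : k + 1 < n) → a ≤ k → k < b →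
      π ⟨k + 1, hk⟩ < π ⟨k, by omega⟩) →
    π ⟨b, hb⟩ < π ⟨a, by omega⟩ := by
  intro b
  induction b with
  | zero => intro a hb hab; omega
  | succ b ih =>
    intro a hb hab h
    rcases Nat.lt_or_ge a b with h' | h'
    · have h1 : π ⟨b + 1, hb⟩ < π ⟨b, by omega⟩ := h b hb (by omega) (by omega)
      have h2 : π ⟨b, by omega⟩ < π ⟨a, by omega⟩ :=
        ih a (by omega) h' (fun k hk hk1 hk2 => h k hk hk1 (by omega))
      exact lt_trans h1 h2
    · have ha : a = b := by omega
      subst ha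
      exact h a hb le_rfl (by omega)

lemma nonasc_lt {n : ℕ} (π : Equiv.Perm (Fin n)) (k : ℕ) (hk : k + 1 < n)
    (h : ¬ π ⟨k + 1, hk⟩ > π ⟨k, by omega⟩) :
    π ⟨k + 1, hk⟩ < π ⟨k, by omega⟩ := by
  rcases lt_or_eq_of_le (not_lt.1 h) with h' | h'
  · exact h'
  · exact absurd (π.injective h') (by simp [Fin.ext_iff])

lemma desc_of_ascSet {n p : ℕ} (hp : p + 2 ≤ n) (π : Equiv.Perm (Fin n))
    (hasc : ascSet n π ⊆ {⟨p, by omega⟩}) (a b : ℕ) (hb : b < n) (hab : a < b)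
    (havoid : b ≤ p ∨ p + 1 ≤ a) :
    π ⟨b, hb⟩ < π ⟨a, by omega⟩ := by
  apply desc_trans π b a hb hab
  intro k hk hk1 hk2
  apply nonasc_lt
  intro hcontra
  have hmem : (⟨k, by omega⟩ : Fin (n - 1)) ∈ ascSet n π := by
    rw [ascSet, Finset.mem_filter]
    exact ⟨Finset.mem_univ _, hcontra⟩
  have := hasc hmem
  rw [Finset.mem_singleton, Fin.mk.injEq] at this
  omega

lemma blockPerm_eq {n p : ℕ} (hp : p + 2 ≤ n) (π : Equiv.Perm (Fin n))
    (hasc : ascSet n π ⊆ {⟨p, by omega⟩}) :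
    blockPerm hp (firstBlock n p hp π) (firstBlock_card hp π) = π := by
  set S := firstBlock n p hp π with hSdef
  have hS : S.card = p + 1 := firstBlock_card hp π
  -- the first-block enumeration
  have hg : (fun j : Fin (p+1) => π ⟨p - j.val, by omega⟩) = S.orderEmbOfFin hS := by
    apply Finset.orderEmbOfFin_unique
    · intro x
      simp only [hSdef, firstBlock, Finset.mem_image]
      exact ⟨⟨p - x.val, by have := x.isLt; omega⟩, Finset.mem_univ _, rfl⟩
    · intro j j' hjj'
      have hj := j.isLt; have hj' := j'.isLt
      exact desc_of_ascSet hp π hasc (p - j'.val) (p - j.val) (by omega)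
        (by rw [Fin.lt_def] at hjj'; omega) (by omega)
  have hg' : (fun j : Fin (n - (p+1)) => π ⟨n - 1 - j.val, by have := j.isLt; omega⟩)
      = Sᶜ.orderEmbOfFin (compl_card hp hS) := by
    apply Finset.orderEmbOfFin_unique
    · intro x
      have hx := x.isLt
      simp only [Finset.mem_compl, hSdef, firstBlock, Finset.mem_image, not_exists]
      rintro j ⟨-, hj⟩
      have := π.injective hj
      rw [Fin.mk.injEq] at this
      have := j.isLt
      omega
    · intro j j' hjj'
      have hj := j.isLt; have hj' := j'.isLt
      exact desc_of_ascSet hp π hasc (n - 1 - j'.val) (n - 1 - j.val) (by omega)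
        (by rw [Fin.lt_def] at hjj'; omega) (by omega)
  apply Equiv.ext
  intro i
  have hi := i.isLt
  by_cases h : i.val ≤ p
  · rw [blockPerm_apply_le hp S hS i h, ← hg]
    exact congrArg π (Fin.ext (show p - (p - (i : ℕ)) = (i : ℕ) by omega))
  · rw [blockPerm_apply_gt hp S hS i (by omega), ← hg']
    exact congrArg π (Fin.ext (show n - 1 - (n - 1 - (i : ℕ)) = (i : ℕ) by omega))

lemma card_ascSubset {n p : ℕ} (hp : p + 2 ≤ n) :
    (Finset.univ.filter fun π : Equiv.Perm (Fin n) =>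
      ascSet n π ⊆ {⟨p, by omega⟩}).card = Nat.choose n (p + 1) := by
  have := Finset.card_powersetCard (p + 1) (Finset.univ : Finset (Fin n))
  rw [Finset.card_univ, Fintype.card_fin] at this
  rw [← this]
  refine Finset.card_bij' (fun π _ => firstBlock n p hp π)
    (fun S hS => blockPerm hp S (Finset.mem_powersetCard.1 hS).2) ?_ ?_ ?_ ?_
  · intro π hπ
    rw [Finset.mem_powersetCard]
    exact ⟨Finset.subset_univ _, firstBlock_card hp π⟩
  · intro S hS
    rw [Finset.mem_filter]
    exact ⟨Finset.mem_univ _, blockPerm_ascSet hp S _⟩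
  · intro π hπ
    rw [Finset.mem_filter] at hπ
    exact blockPerm_eq hp π hπ.2
  · intro S hS
    exact firstBlock_blockPerm hp S _

end Block

lemma card_ascEmpty {n : ℕ} (hn : 1 ≤ n) :
    (Finset.univ.filter fun π : Equiv.Perm (Fin n) => ascSet n π = ∅).card = 1 := by
  have hfe : (Finset.univ.filter fun π : Equiv.Perm (Fin n) => ascSet n π = ∅)
      = {Fin.revPerm} := by
    ext π
    rw [Finset.mem_filter, Finset.mem_singleton]
    constructor
    · rintro ⟨-, hasc⟩
      -- π ∘ rev is strictly monotone, hence equal to id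
      have hmono : StrictMono (fun j : Fin n => π j.rev) := by
        intro j j' hjj'
        have hrev : j'.rev < j.rev := Fin.rev_lt_rev.2 hjj'
        have hd : π ⟨j.rev.val, j.rev.isLt⟩ < π ⟨j'.rev.val, by have := j'.rev.isLt; omega⟩ := by
          apply desc_trans π j.rev.val j'.rev.val j.rev.isLt hrev
          intro k hk hk1 hk2
          apply nonasc_lt
          intro hcontra
          have hmem : (⟨k, by omega⟩ : Fin (n - 1)) ∈ ascSet n π := by
            rw [ascSet, Finset.mem_filter]
            exact ⟨Finset.mem_univ _, hcontra⟩
          rw [hasc] at hmem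
          exact absurd hmem (Finset.notMem_empty _)
        exact hd
      have hid : StrictMono (id : Fin n → Fin n) := strictMono_id
      have huniv : (Finset.univ : Finset (Fin n)).card = n := by simp
      have h1 : (fun j : Fin n => π j.rev) = Finset.univ.orderEmbOfFin huniv :=
        Finset.orderEmbOfFin_unique huniv (fun x => Finset.mem_univ _) hmono
      have h2 : (id : Fin n → Fin n) = Finset.univ.orderEmbOfFin huniv :=
        Finset.orderEmbOfFin_unique huniv (fun x => Finset.mem_univ _) hid
      have heq : (fun j : Fin n => π j.rev) = id := by rw [h1, h2]
      apply Equiv.ext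
      intro i
      have := congrFun heq i.rev
      simp only [Fin.rev_rev, id_eq] at this
      rw [this]
      rfl
    · rintro rfl
      refine ⟨Finset.mem_univ _, ?_⟩
      rw [ascSet, Finset.filter_eq_empty_iff]
      intro i _
      have hilt := i.isLt
      simp only [Fin.revPerm_apply, not_lt]
      apply le_of_lt
      rw [Fin.lt_def]
      simp only [Fin.val_rev]
      omega
  rw [hfe, Finset.card_singleton]

theorem U_pow (n m : ℕ) (hm : 1 ≤ m) (hmn : m < n) :
    U n (2 ^ m) = Nat.choose n (m + 1) - 1 := by
  have hn : 2 ≤ n := by omega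
  rcases Nat.lt_or_ge (n - 2) m with hbig | hm2
  · -- m = n - 1 : impossible index
    have hmn1 : m = n - 1 := by omega
    have hempty : (Finset.univ.filter fun π : Equiv.Perm (Fin n) =>
        updownIndex n π = 2 ^ m) = ∅ := by
      rw [Finset.filter_eq_empty_iff]
      intro π _
      intro hcontra
      have := ((updown_eq_pow_iff n m hn π).1 hcontra).1
      omega
    rw [U, hempty, Finset.card_empty]
    have : m + 1 = n := by omega
    rw [this, Nat.choose_self]
  · -- main case
    set p := n - 2 - m with hpdef
    have hp : p + 2 ≤ n := by omega
    have hfilter : (Finset.univ.filter fun π : Equiv.Perm (Fin n) =>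
        updownIndex n π = 2 ^ m)
        = Finset.univ.filter fun π : Equiv.Perm (Fin n) =>
            ascSet n π = {⟨p, by omega⟩} := by
      apply Finset.filter_congr
      intro π _
      rw [updown_eq_pow_iff n m hn π]
      constructor
      · rintro ⟨-, h⟩; exact h
      · intro h; exact ⟨hm2, h⟩
    have hsplit : (Finset.univ.filter fun π : Equiv.Perm (Fin n) =>
        ascSet n π ⊆ {⟨p, by omega⟩}).card
        = (Finset.univ.filter fun π : Equiv.Perm (Fin n) =>
            ascSet n π = {⟨p, by omega⟩}).card
          + (Finset.univ.filter fun π : Equiv.Perm (Fin n) => ascSet n π = ∅).card := by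
      have hcongr : (Finset.univ.filter fun π : Equiv.Perm (Fin n) =>
          ascSet n π ⊆ {⟨p, by omega⟩})
          = Finset.univ.filter fun π : Equiv.Perm (Fin n) =>
              (ascSet n π = {⟨p, by omega⟩} ∨ ascSet n π = ∅) := by
        apply Finset.filter_congr
        intro π _
        rw [Finset.subset_singleton_iff]
        tauto
      rw [hcongr, Finset.filter_or]
      apply Finset.card_union_of_disjoint
      rw [Finset.disjoint_filter]
      intro π _ h1 h2
      rw [h2] at h1
      exact absurd h1.symm (Finset.singleton_ne_empty _)
    rw [card_ascSubset hp, card_ascEmpty (by omega)] at hsplit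
    have hchoose : Nat.choose n (p + 1) = Nat.choose n (m + 1) := by
      have h1 : p + 1 = n - (m + 1) := by omega
      rw [h1]
      exact Nat.choose_symm (by omega)
    rw [U, hfilter]
    omega
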